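/- Let C be a bounded convex subset of M with nonempty interior and 0 ∈ int C, and let W : ℝ^d × M → [0,+∞] be Borel measurable, Y-periodic in its first variable (Y = (0,1)^d), with W(x,ξ) = +∞ whenever ξ ∉ cl(C). Assume (H1): for every ε > 0 there exists η > 0 such that for every x ∈ ℝ^d, every ξ with W(x,ξ) < +∞ and every t ∈ [0,1), 1−t ≤ η implies W(x,tξ) ≤ W(x,ξ) + ε; and assume (H2): for every compact K ⊆ int C, the function x ↦ sup_{ξ∈K} W(x,ξ) is essentially bounded on every compact subset of ℝ^d. Then the homogenized density HW is r.u.u.s.c. in its effective domain: for every ε > 0 there exists η > 0 such that for every ξ ∈ M with HW(ξ) < +∞ and every t ∈ [0,1), 1−t ≤ η implies HW(tξ) ≤ HW(ξ) + ε. -/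

import Mathlib

open MeasureTheory Filter
open scoped ENNReal Topology

/-- The open cube `(0,n)^d` in `ℝ^d`. -/
def cube (d n : ℕ) : Set (Fin d → ℝ) := {x | ∀ i, x i ∈ Set.Ioo (0 : ℝ) (n : ℝ)}

/-- The homogenized density. -/
noncomputable def HF {d m : ℕ}
    (F : (Fin d → ℝ) → ((Fin d → ℝ) →L[ℝ] (Fin m → ℝ)) → ℝ≥0∞)
    (ξ : (Fin d → ℝ) →L[ℝ] (Fin m → ℝ)) : ℝ≥0∞ :=
  ⨅ (n : ℕ) (_ : 1 ≤ n),
    (1 / (n : ℝ≥0∞) ^ d) *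
      ⨅ (φ : (Fin d → ℝ) → (Fin m → ℝ)) (_ : ∃ K, LipschitzWith K φ)
        (_ : ∀ x ∉ cube d n, φ x = 0),
        ∫⁻ x in cube d n, F x (ξ + fderiv ℝ φ x) ∂volume

lemma cube_eq_pi (d n : ℕ) : cube d n = Set.univ.pi fun _ : Fin d => Set.Ioo (0 : ℝ) (n : ℝ) := by
  ext x; simp [cube, Set.mem_pi]

lemma volume_cube (d n : ℕ) : volume (cube d n) = (n : ℝ≥0∞) ^ d := by
  rw [cube_eq_pi, volume_pi_pi]
  simp [Real.volume_Ioo, ENNReal.ofReal_natCast]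

lemma smul_fderiv_key {d m : ℕ} (t : ℝ) (φ : (Fin d → ℝ) → (Fin m → ℝ))
    (ξ : (Fin d → ℝ) →L[ℝ] (Fin m → ℝ)) (x : Fin d → ℝ) :
    t • ξ + fderiv ℝ (t • φ) x = t • (ξ + fderiv ℝ φ x) := by
  rcases eq_or_ne t 0 with rfl | ht
  · simp only [zero_smul, zero_add]
    rw [show (0 : (Fin d → ℝ) → Fin m → ℝ) = fun _ => (0 : Fin m → ℝ) from rfl, fderiv_fun_const]
    simp
  · by_cases hdiff : DifferentiableAt ℝ φ x
    · have : fderiv ℝ (t • φ) x = t • fderiv ℝ φ x := fderiv_const_smul hdiff t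
      rw [this, smul_add]
    · have h1 : fderiv ℝ φ x = 0 := fderiv_zero_of_not_differentiableAt hdiff
      have h2 : ¬ DifferentiableAt ℝ (t • φ) x := by
        intro h
        have : DifferentiableAt ℝ (t⁻¹ • (t • φ)) x := h.const_smul t⁻¹
        rw [smul_smul, inv_mul_cancel₀ ht, one_smul] at this
        exact hdiff this
      have h2' : fderiv ℝ (t • φ) x = 0 := fderiv_zero_of_not_differentiableAt h2
      rw [h1, h2', smul_add, smul_zero]

/-- Under (H1) and (H2), the homogenized density `HW` is radially uniformly
upper semicontinuous on its effective domain. -/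
theorem stmt_18 {d m : ℕ} (hd : 0 < d)
    {C : Set ((Fin d → ℝ) →L[ℝ] (Fin m → ℝ))}
    (hconv : Convex ℝ C) (hbdd : Bornology.IsBounded C)
    (hint : (interior C).Nonempty) (h0 : 0 ∈ interior C)
    (W : (Fin d → ℝ) → ((Fin d → ℝ) →L[ℝ] (Fin m → ℝ)) → ℝ≥0∞)
    (hWmeas : Measurable (Function.uncurry W))
    (hWper : ∀ (x : Fin d → ℝ) (ξ : (Fin d → ℝ) →L[ℝ] (Fin m → ℝ)) (z : Fin d → ℤ),
      W (x + fun i => (z i : ℝ)) ξ = W x ξ)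
    (hdom : ∀ x ξ, ξ ∉ closure C → W x ξ = ⊤)
    (hH1 : ∀ ε : ℝ, 0 < ε → ∃ η : ℝ, 0 < η ∧
      ∀ (x : Fin d → ℝ) (ξ : (Fin d → ℝ) →L[ℝ] (Fin m → ℝ)), W x ξ ≠ ⊤ →
        ∀ t ∈ Set.Ico (0 : ℝ) 1, 1 - t ≤ η → W x (t • ξ) ≤ W x ξ + ENNReal.ofReal ε)
    (hH2 : ∀ K : Set ((Fin d → ℝ) →L[ℝ] (Fin m → ℝ)), IsCompact K → K ⊆ interior C →
      ∀ Q : Set (Fin d → ℝ), IsCompact Q →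
        essSup (fun x => ⨆ ξ ∈ K, W x ξ) (volume.restrict Q) < ⊤) :
    ∀ ε : ℝ, 0 < ε → ∃ η : ℝ, 0 < η ∧
      ∀ ξ : (Fin d → ℝ) →L[ℝ] (Fin m → ℝ), HF W ξ ≠ ⊤ →
        ∀ t ∈ Set.Ico (0 : ℝ) 1, 1 - t ≤ η → HF W (t • ξ) ≤ HF W ξ + ENNReal.ofReal ε := by
  intro ε hε
  obtain ⟨η, hη, hkey⟩ := hH1 ε hε
  refine ⟨η, hη, fun ξ _ t ht htη => ?_⟩
  -- pointwise bound from (H1)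
  have hpt : ∀ (x : Fin d → ℝ) (ζ : (Fin d → ℝ) →L[ℝ] (Fin m → ℝ)),
      W x (t • ζ) ≤ W x ζ + ENNReal.ofReal ε := by
    intro x ζ
    by_cases h : W x ζ = ⊤
    · simp [h]
    · exact hkey x ζ h t ht htη
  -- main estimate for each competitor
  have key : ∀ n : ℕ, 1 ≤ n → ∀ φ : (Fin d → ℝ) → (Fin m → ℝ),
      (∃ K, LipschitzWith K φ) → (∀ x ∉ cube d n, φ x = 0) →
      HF W (t • ξ) ≤
        (1 / (n : ℝ≥0∞) ^ d) * (∫⁻ x in cube d n, W x (ξ + fderiv ℝ φ x) ∂volume)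
          + ENNReal.ofReal ε := by
    intro n hn φ hlip hzero
    have hnd0 : ((n : ℝ≥0∞) ^ d) ≠ 0 := by
      simp only [ne_eq, pow_eq_zero_iff', Nat.cast_eq_zero]
      rintro ⟨rfl, -⟩; omega
    have hndtop : ((n : ℝ≥0∞) ^ d) ≠ ⊤ := by
      exact ENNReal.pow_ne_top (ENNReal.natCast_ne_top n)
    have hlip' : ∃ K, LipschitzWith K (t • φ) := by
      obtain ⟨K, hK⟩ := hlip
      exact ⟨_, (lipschitzWith_smul t).comp hK⟩
    have hzero' : ∀ x ∉ cube d n, (t • φ) x = 0 := by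
      intro x hx; simp [hzero x hx]
    calc HF W (t • ξ)
        ≤ (1 / (n : ℝ≥0∞) ^ d) *
            ∫⁻ x in cube d n, W x (t • ξ + fderiv ℝ (t • φ) x) ∂volume := by
          refine le_trans (iInf_le _ n) (le_trans (iInf_le _ hn) (mul_le_mul_right ?_ _))
          exact le_trans (iInf_le _ (t • φ)) (le_trans (iInf_le _ hlip') (iInf_le _ hzero'))
      _ = (1 / (n : ℝ≥0∞) ^ d) *
            ∫⁻ x in cube d n, W x (t • (ξ + fderiv ℝ φ x)) ∂volume := by
          congr 1
          exact lintegral_congr fun x => by rw [smul_fderiv_key]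
      _ ≤ (1 / (n : ℝ≥0∞) ^ d) *
            ∫⁻ x in cube d n, (W x (ξ + fderiv ℝ φ x) + ENNReal.ofReal ε) ∂volume := by
          refine mul_le_mul_right (lintegral_mono fun x => ?_) _
          exact hpt x _
      _ = (1 / (n : ℝ≥0∞) ^ d) *
            ((∫⁻ x in cube d n, W x (ξ + fderiv ℝ φ x) ∂volume)
              + ENNReal.ofReal ε * (n : ℝ≥0∞) ^ d) := by
          rw [lintegral_add_right _ measurable_const, setLIntegral_const, volume_cube]
      _ = (1 / (n : ℝ≥0∞) ^ d) * (∫⁻ x in cube d n, W x (ξ + fderiv ℝ φ x) ∂volume)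
            + ENNReal.ofReal ε := by
          rw [mul_add]
          congr 1
          rw [one_div, ← mul_assoc, mul_comm ((n : ℝ≥0∞) ^ d)⁻¹, mul_assoc,
            ENNReal.inv_mul_cancel hnd0 hndtop, mul_one]
  -- assemble via infimum manipulations
  conv_rhs => rw [HF]
  rw [ENNReal.iInf_add]
  refine le_iInf fun n => ?_
  rw [ENNReal.iInf_add]
  refine le_iInf fun hn => ?_
  have hnd0 : ((n : ℝ≥0∞) ^ d) ≠ 0 := by
    simp only [ne_eq, pow_eq_zero_iff', Nat.cast_eq_zero]
    rintro ⟨rfl, -⟩; omega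
  have hndtop : ((n : ℝ≥0∞) ^ d) ≠ ⊤ :=
    ENNReal.pow_ne_top (ENNReal.natCast_ne_top n)
  have hc0 : (1 / (n : ℝ≥0∞) ^ d) ≠ ⊤ := by
    rw [one_div]; exact ENNReal.inv_ne_top.mpr hnd0
  have hcne0 : (1 / (n : ℝ≥0∞) ^ d) ≠ 0 := by
    rw [one_div]; exact ENNReal.inv_ne_zero.mpr hndtop
  rw [ENNReal.mul_iInf_of_ne hcne0 hc0, ENNReal.iInf_add]
  refine le_iInf fun φ => ?_
  rw [ENNReal.mul_iInf_of_ne hcne0 hc0, ENNReal.iInf_add]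
  refine le_iInf fun hlip => ?_
  rw [ENNReal.mul_iInf_of_ne hcne0 hc0, ENNReal.iInf_add]
  refine le_iInf fun hzero => ?_
  exact key n hn φ hlip hzero
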